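/- For every positive integer n, (1/n)·∑_{k=0}^{n−1} T_k·M_k·(−3)^{n−1−k} is an integer, where T_k = ∑_{j=0}^{⌊k/2⌋} C(k,2j)C(2j,j) is the k-th central trinomial coefficient and M_k = ∑_{j=0}^{⌊k/2⌋} C(k,2j)·C_j is the k-th Motzkin number. -/

import Mathlib

open Finset

private def tt (n : ℕ) : ℤ := ∑ j ∈ range (n / 2 + 1), (n.choose (2 * j) : ℤ) * ((2 * j).choose j : ℤ)
private def mm (n : ℕ) : ℤ := ∑ j ∈ range (n / 2 + 1), (n.choose (2 * j) : ℤ) * (catalan j : ℤ)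

private lemma chooseId (n k : ℕ) :
    (n.choose (k+1) : ℤ) * (k+1) = (n.choose k : ℤ) * ((n : ℤ) - k) := by
  rcases le_or_gt k n with h | h
  · have h1 := Nat.choose_succ_right_eq n k
    zify [h] at h1
    exact h1
  · rw [Nat.choose_eq_zero_of_lt h, Nat.choose_eq_zero_of_lt (Nat.lt_succ_of_lt h)]
    simp

private lemma bRec (j : ℕ) :
    ((j:ℤ)+1) * ((2*(j+1)).choose (j+1) : ℤ) = 2*(2*(j:ℤ)+1) * ((2*j).choose j : ℤ) := by
  have h := Nat.succ_mul_centralBinom_succ j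
  unfold Nat.centralBinom at h
  exact_mod_cast congrArg (Nat.cast (R := ℤ)) h

private lemma cRec (j : ℕ) :
    ((j:ℤ)+2) * (catalan (j+1) : ℤ) = 2*(2*(j:ℤ)+1) * (catalan j : ℤ) := by
  have h1 := succ_mul_catalan_eq_centralBinom (j+1)
  have h2 := succ_mul_catalan_eq_centralBinom j
  have h3 := Nat.succ_mul_centralBinom_succ j
  have hne : ((j:ℤ)+1) ≠ 0 := by positivity
  apply mul_left_cancel₀ hne
  have h1' : ((j:ℤ)+1+1) * (catalan (j+1) : ℤ) = ((j+1).centralBinom : ℤ) := by exact_mod_cast congrArg (Nat.cast (R := ℤ)) h1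
  have h2' : ((j:ℤ)+1) * (catalan j : ℤ) = (j.centralBinom : ℤ) := by exact_mod_cast congrArg (Nat.cast (R := ℤ)) h2
  have h3' : ((j:ℤ)+1) * ((j+1).centralBinom : ℤ) = 2*(2*(j:ℤ)+1) * (j.centralBinom : ℤ) := by exact_mod_cast congrArg (Nat.cast (R := ℤ)) h3
  linear_combination ((j:ℤ)+1)*h1' + h3' - 2*(2*(j:ℤ)+1)*h2'

private lemma tt_ext (n N : ℕ) (h : n / 2 + 1 ≤ N) :
    tt n = ∑ j ∈ range N, (n.choose (2 * j) : ℤ) * ((2 * j).choose j : ℤ) := by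
  unfold tt
  apply Finset.sum_subset (by simpa using h)
  intro j _ hj
  simp only [mem_range, not_lt] at hj
  have : n < 2 * j := by omega
  simp [Nat.choose_eq_zero_of_lt this]

private lemma mm_ext (n N : ℕ) (h : n / 2 + 1 ≤ N) :
    mm n = ∑ j ∈ range N, (n.choose (2 * j) : ℤ) * (catalan j : ℤ) := by
  unfold mm
  apply Finset.sum_subset (by simpa using h)
  intro j _ hj
  simp only [mem_range, not_lt] at hj
  have : n < 2 * j := by omega
  simp [Nat.choose_eq_zero_of_lt this]

private lemma pascal2 (n k : ℕ) :
    ((n+2).choose (k+2) : ℤ) = (n.choose k : ℤ) + 2 * (n.choose (k+1) : ℤ) + (n.choose (k+2) : ℤ) := by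
  have : (n+2).choose (k+2) = n.choose k + n.choose (k+1) + (n.choose (k+1) + n.choose (k+2)) := by
    rw [Nat.choose_succ_succ (n+1) (k+1), Nat.choose_succ_succ n k, Nat.choose_succ_succ n (k+1)]
  rw [this]; push_cast; ring

private lemma pascal1 (n k : ℕ) :
    ((n+1).choose (k+1) : ℤ) = (n.choose k : ℤ) + (n.choose (k+1) : ℤ) := by
  rw [Nat.choose_succ_succ n k]; push_cast; ring

private lemma keyT (n j : ℕ) :
    ((n+2).choose (2*(j+1)) : ℤ) * ((n:ℤ)+2) * ((2*(j+1)).choose (j+1) : ℤ)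
      + ((n:ℤ)+1) * (n.choose (2*(j+1)) : ℤ) * ((2*(j+1)).choose (j+1) : ℤ)
      - (2*(n:ℤ)+3) * ((n+1).choose (2*(j+1)) : ℤ) * ((2*(j+1)).choose (j+1) : ℤ)
    = 4*((n:ℤ)+1) * (n.choose (2*j) : ℤ) * ((2*j).choose j : ℤ) := by
  have e2 : 2*(j+1) = (2*j+1)+1 := by ring
  have hp2 := pascal2 n (2*j)
  have hp1' := pascal1 n (2*j+1)
  have hc := chooseId n (2*j)
  have hb := bRec j
  have hne : ((j:ℤ)+1) ≠ 0 := by positivity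
  apply mul_left_cancel₀ hne
  rw [e2] at *
  push_cast at hc ⊢
  linear_combination
    (((n+2).choose (2*j+1+1) : ℤ) * ((n:ℤ)+2) + ((n:ℤ)+1) * (n.choose (2*j+1+1) : ℤ)
      - (2*(n:ℤ)+3) * ((n+1).choose (2*j+1+1) : ℤ)) * hb
    + 2*(2*(j:ℤ)+1) * ((2*j).choose j : ℤ) * (((n:ℤ)+2) * hp2 - (2*(n:ℤ)+3) * hp1')
    + 2 * ((2*j).choose j : ℤ) * hc

private lemma keyM (n j : ℕ) :
    ((n+2).choose (2*(j+1)) : ℤ) * ((n:ℤ)+4) * (catalan (j+1) : ℤ)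
      + ((n:ℤ)+1) * (n.choose (2*(j+1)) : ℤ) * (catalan (j+1) : ℤ)
      - (2*(n:ℤ)+5) * ((n+1).choose (2*(j+1)) : ℤ) * (catalan (j+1) : ℤ)
    = 4*((n:ℤ)+1) * (n.choose (2*j) : ℤ) * (catalan j : ℤ) := by
  have e2 : 2*(j+1) = (2*j+1)+1 := by ring
  have hp2 := pascal2 n (2*j)
  have hp1' := pascal1 n (2*j+1)
  have hc := chooseId n (2*j)
  have hg := cRec j
  have hne : ((j:ℤ)+2) ≠ 0 := by positivity
  apply mul_left_cancel₀ hne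
  rw [e2] at *
  push_cast at hc ⊢
  linear_combination
    (((n+2).choose (2*j+1+1) : ℤ) * ((n:ℤ)+4) + ((n:ℤ)+1) * (n.choose (2*j+1+1) : ℤ)
      - (2*(n:ℤ)+5) * ((n+1).choose (2*j+1+1) : ℤ)) * hg
    + 2*(2*(j:ℤ)+1) * (catalan j : ℤ) * (((n:ℤ)+4) * hp2 - (2*(n:ℤ)+5) * hp1')
    + 6 * (catalan j : ℤ) * hc

private lemma ttRec (n : ℕ) :
    ((n:ℤ)+2) * tt (n+2) = (2*(n:ℤ)+3) * tt (n+1) + 3*((n:ℤ)+1) * tt n := by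
  have h2 : tt (n+2) = ∑ j ∈ range (n/2+1+1), ((n+2).choose (2*j):ℤ) * ((2*j).choose j :ℤ) :=
    tt_ext _ _ (by omega)
  have h1 : tt (n+1) = ∑ j ∈ range (n/2+1+1), ((n+1).choose (2*j):ℤ) * ((2*j).choose j :ℤ) :=
    tt_ext _ _ (by omega)
  have h0 : tt n = ∑ j ∈ range (n/2+1+1), (n.choose (2*j):ℤ) * ((2*j).choose j :ℤ) :=
    tt_ext _ _ (by omega)
  have h0' : tt n = ∑ j ∈ range (n/2+1), (n.choose (2*j):ℤ) * ((2*j).choose j :ℤ) :=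
    tt_ext _ _ (by omega)
  have main : ((n:ℤ)+2) * (∑ j ∈ range (n/2+1+1), ((n+2).choose (2*j):ℤ) * ((2*j).choose j :ℤ))
      + ((n:ℤ)+1) * (∑ j ∈ range (n/2+1+1), (n.choose (2*j):ℤ) * ((2*j).choose j :ℤ))
      - (2*(n:ℤ)+3) * (∑ j ∈ range (n/2+1+1), ((n+1).choose (2*j):ℤ) * ((2*j).choose j :ℤ))
      = 4*((n:ℤ)+1) * ∑ j ∈ range (n/2+1), (n.choose (2*j):ℤ) * ((2*j).choose j :ℤ) := by
    rw [Finset.mul_sum, Finset.mul_sum, Finset.mul_sum, Finset.mul_sum,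
      ← Finset.sum_add_distrib, ← Finset.sum_sub_distrib, Finset.sum_range_succ']
    have hz : ((n:ℤ)+2) * (((n+2).choose (2*0):ℤ) * ((2*0).choose 0 :ℤ))
        + ((n:ℤ)+1) * ((n.choose (2*0):ℤ) * ((2*0).choose 0 :ℤ))
        - (2*(n:ℤ)+3) * (((n+1).choose (2*0):ℤ) * ((2*0).choose 0 :ℤ)) = 0 := by
      norm_num
      ring
    rw [hz, add_zero]
    refine Finset.sum_congr rfl fun j _ => ?_
    linear_combination keyT n j
  rw [h2, h1, h0']
  linear_combination main - ((n:ℤ)+1) * (h0.symm.trans h0')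

private lemma mmRec (n : ℕ) :
    ((n:ℤ)+4) * mm (n+2) = (2*(n:ℤ)+5) * mm (n+1) + 3*((n:ℤ)+1) * mm n := by
  have h2 : mm (n+2) = ∑ j ∈ range (n/2+1+1), ((n+2).choose (2*j):ℤ) * (catalan j :ℤ) :=
    mm_ext _ _ (by omega)
  have h1 : mm (n+1) = ∑ j ∈ range (n/2+1+1), ((n+1).choose (2*j):ℤ) * (catalan j :ℤ) :=
    mm_ext _ _ (by omega)
  have h0 : mm n = ∑ j ∈ range (n/2+1+1), (n.choose (2*j):ℤ) * (catalan j :ℤ) :=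
    mm_ext _ _ (by omega)
  have h0' : mm n = ∑ j ∈ range (n/2+1), (n.choose (2*j):ℤ) * (catalan j :ℤ) :=
    mm_ext _ _ (by omega)
  have main : ((n:ℤ)+4) * (∑ j ∈ range (n/2+1+1), ((n+2).choose (2*j):ℤ) * (catalan j :ℤ))
      + ((n:ℤ)+1) * (∑ j ∈ range (n/2+1+1), (n.choose (2*j):ℤ) * (catalan j :ℤ))
      - (2*(n:ℤ)+5) * (∑ j ∈ range (n/2+1+1), ((n+1).choose (2*j):ℤ) * (catalan j :ℤ))
      = 4*((n:ℤ)+1) * ∑ j ∈ range (n/2+1), (n.choose (2*j):ℤ) * (catalan j :ℤ) := by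
    rw [Finset.mul_sum, Finset.mul_sum, Finset.mul_sum, Finset.mul_sum,
      ← Finset.sum_add_distrib, ← Finset.sum_sub_distrib, Finset.sum_range_succ']
    have hz : ((n:ℤ)+4) * (((n+2).choose (2*0):ℤ) * (catalan 0 :ℤ))
        + ((n:ℤ)+1) * ((n.choose (2*0):ℤ) * (catalan 0 :ℤ))
        - (2*(n:ℤ)+5) * (((n+1).choose (2*0):ℤ) * (catalan 0 :ℤ)) = 0 := by
      norm_num
      ring
    rw [hz, add_zero]
    refine Finset.sum_congr rfl fun j _ => ?_
    linear_combination keyM n j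
  rw [h2, h1, h0']
  linear_combination main - ((n:ℤ)+1) * (h0.symm.trans h0')

private lemma tt0 : tt 0 = 1 := by norm_num [tt]
private lemma tt1 : tt 1 = 1 := by norm_num [tt]
private lemma mm0 : mm 0 = 1 := by norm_num [mm]
private lemma mm1 : mm 1 = 1 := by norm_num [mm]

private lemma claim (N : ℕ) :
    ∑ k ∈ range (N+1), tt k * mm k * (-3 : ℤ)^(N-k)
      = ((N:ℤ)+1) * (((N:ℤ)+3) * tt N * mm (N+1) - ((N:ℤ)+2) * tt (N+1) * mm N) := by
  induction N with
  | zero =>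
      simp [tt0, tt1, mm0, mm1]
  | succ n ih =>
      have hpeel : ∑ k ∈ range (n+1+1), tt k * mm k * (-3 : ℤ)^(n+1-k)
          = (∑ k ∈ range (n+1), tt k * mm k * (-3 : ℤ)^(n-k)) * (-3)
            + tt (n+1) * mm (n+1) := by
        rw [Finset.sum_range_succ, Nat.sub_self, pow_zero, mul_one, Finset.sum_mul]
        congr 1
        refine Finset.sum_congr rfl fun k hk => ?_
        have hk' : k ≤ n := by simpa [Nat.lt_succ_iff] using hk
        have : n + 1 - k = (n - k) + 1 := by omega
        rw [this, pow_succ]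
        ring
      rw [hpeel, ih]
      have hT := ttRec n
      have hM := mmRec n
      have e12 : n + 1 + 1 = n + 2 := by omega
      rw [e12]
      push_cast
      linear_combination ((n:ℤ)+3) * mm (n+1) * hT - ((n:ℤ)+2) * tt (n+1) * hM

theorem n_dvd_sum_trinomial_motzkin (n : ℕ) (hn : 1 ≤ n) :
    (n : ℤ) ∣ ∑ k ∈ range n,
        ((∑ j ∈ range (k / 2 + 1), (k.choose (2 * j) : ℤ) * ((2 * j).choose j : ℤ)) *
          (∑ j ∈ range (k / 2 + 1), (k.choose (2 * j) : ℤ) * (catalan j : ℤ)) *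
          (-3 : ℤ) ^ (n - 1 - k)) := by
  obtain ⟨N, rfl⟩ : ∃ N, n = N + 1 := ⟨n - 1, by omega⟩
  refine ⟨((N:ℤ)+3) * tt N * mm (N+1) - ((N:ℤ)+2) * tt (N+1) * mm N, ?_⟩
  have h := claim N
  have hsum : ∑ k ∈ range (N+1),
      ((∑ j ∈ range (k / 2 + 1), (k.choose (2 * j) : ℤ) * ((2 * j).choose j : ℤ)) *
        (∑ j ∈ range (k / 2 + 1), (k.choose (2 * j) : ℤ) * (catalan j : ℤ)) *
        (-3 : ℤ) ^ (N + 1 - 1 - k))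
      = ∑ k ∈ range (N+1), tt k * mm k * (-3 : ℤ)^(N-k) := by
    refine Finset.sum_congr rfl fun k _ => ?_
    have : N + 1 - 1 - k = N - k := by omega
    rw [this]; rfl
  rw [hsum, h]
  push_cast
  ring
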